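/- Let N be a positive integer, let k and r be natural numbers with r ≥ k, and let A be an r × k integer matrix such that the subgroup R(A) of ℤ^k generated by the rows of A contains N·ℤ^k. Then the index of R(A) in ℤ^k equals the (nonnegative) greatest common divisor of the determinants of all k × k submatrices of A obtained by selecting k of the r rows. -/

import Mathlib

private lemma det_expand {k : ℕ} {ι : Type*} [Fintype ι] [DecidableEq ι]
    (c : Fin k → ι → ℤ) (w : ι → Fin k → ℤ) :
    (Matrix.of fun i => ∑ j, c i j • w j).det
      = ∑ h : Fin k → ι, (∏ i, c i (h i)) * (Matrix.of fun i => w (h i)).det := by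
  classical
  have h1 : (Matrix.of fun i => ∑ j, c i j • w j).det
      = (Matrix.detRowAlternating (R := ℤ) (n := Fin k)).toMultilinearMap
          (fun i => ∑ j, c i j • w j) := rfl
  rw [h1, MultilinearMap.map_sum]
  refine Finset.sum_congr rfl fun h _ => ?_
  have h2 := (Matrix.detRowAlternating (R := ℤ) (n := Fin k)).toMultilinearMap.map_smul_univ
      (fun i => c i (h i)) (fun i => w (h i))
  exact (h2.trans (smul_eq_mul _ _)).trans rfl

/-- If the row span `R(A)` of an `r × k` integer matrix `A` (with `r ≥ k`) contains
`N·ℤ^k`, then the index of `R(A)` in `ℤ^k` equals the nonnegative gcd of the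
determinants of the `k × k` submatrices of `A` obtained by selecting `k` of the
`r` rows. -/
theorem index_row_span_eq_gcd_minors (N : ℕ) (hN : 0 < N) (k r : ℕ) (hrk : k ≤ r)
    (A : Matrix (Fin r) (Fin k) ℤ)
    (hNA : ∀ v : Fin k → ℤ, (N : ℤ) • v ∈ Submodule.span ℤ (Set.range A)) :
    (Nat.card ((Fin k → ℤ) ⧸ Submodule.span ℤ (Set.range A)) : ℤ) =
      Finset.gcd (Finset.univ.filter fun g : Fin k → Fin r => Function.Injective g)
        (fun g => (A.submatrix g id).det) := by
  classical
  set S := Submodule.span ℤ (Set.range A) with hS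
  obtain ⟨n, snf⟩ := S.smithNormalForm (Pi.basisFun ℤ (Fin k))
  -- the submodule has full rank
  have hnk : n = k := by
    by_contra hne
    have hnle : n ≤ k := by simpa using Fintype.card_le_of_embedding snf.f
    have hnsurj : ¬ Function.Surjective snf.f := fun hs => hne (le_antisymm hnle (by
      simpa using Fintype.card_le_of_surjective _ hs))
    obtain ⟨i₀, hi₀⟩ := not_forall.mp hnsurj
    have hi₀' : i₀ ∉ Set.range snf.f := by simpa using hi₀
    have hx : (N : ℤ) • snf.bM i₀ ∈ S := hNA _
    have h0 := snf.repr_eq_zero_of_notMem_range (m := ⟨_, hx⟩) hi₀'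
    simp only [map_smul, Module.Basis.repr_self, Finsupp.smul_apply, Finsupp.single_eq_same,
      smul_eq_mul, mul_one] at h0
    exact (by exact_mod_cast hN.ne' : (N : ℤ) ≠ 0) h0
  subst hnk
  have hbij : Function.Bijective snf.f :=
    (Finite.injective_iff_bijective).mp snf.f.injective
  set d : ℤ := ∏ i, snf.a i with hd
  -- the rows of the Smith normal form basis of S
  set w : Fin n → (Fin n → ℤ) := fun j => snf.a j • snf.bM (snf.f j) with hw
  have hwmem : ∀ j, w j ∈ S := fun j => by
    rw [hw]
    simp only
    rw [← snf.snf j]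
    exact (snf.bN j).2
  -- every element of S is a ℤ-combination of the `w j`
  have hmem : ∀ x ∈ S, ∃ c : Fin n → ℤ, x = ∑ j, c j • w j := by
    intro x hx
    obtain ⟨c, hc⟩ := (snf.bN.mem_submodule_iff' (x := x)).mp hx
    refine ⟨c, hc.trans ?_⟩
    refine Finset.sum_congr rfl fun j _ => ?_
    rw [snf.snf j]
  -- `d` divides the determinant of any matrix whose rows are chosen from the `w j`
  have hwdet : ∀ h : Fin n → Fin n, d ∣ (Matrix.of fun i => w (h i)).det := by
    intro h
    by_cases hinj : Function.Injective h
    · have hbijh : Function.Bijective h := (Finite.injective_iff_bijective).mp hinj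
      have he : (Matrix.of fun i => w (h i))
          = Matrix.of fun i j => (snf.a (h i)) *
              (Matrix.of fun i' j' => snf.bM (snf.f (h i')) j') i j := by
        ext i j
        simp [hw, Pi.smul_apply, smul_eq_mul]
      rw [he, Matrix.det_mul_column]
      have hp : ∏ i, snf.a (h i) = d := Equiv.prod_comp (Equiv.ofBijective h hbijh) snf.a
      rw [hp]
      exact Dvd.dvd.mul_right dvd_rfl _
    · obtain ⟨i, j, hij, hne⟩ := Function.not_injective_iff.mp hinj
      rw [Matrix.det_zero_of_row_eq hne (show w (h i) = w (h j) by rw [hij])]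
      exact dvd_zero d
  -- `d` divides every maximal minor
  have hdvd1 : ∀ g : Fin n → Fin r, d ∣ (A.submatrix g id).det := by
    intro g
    choose c hc using fun i => hmem (A (g i)) (Submodule.subset_span (Set.mem_range_self (g i)))
    have hA : A.submatrix g id = Matrix.of fun i => ∑ j, c i j • w j := by
      ext i j
      exact congrFun (hc i) j
    rw [hA, det_expand]
    exact Finset.dvd_sum fun h _ => Dvd.dvd.mul_left (hwdet h) _
  set G := Finset.gcd (Finset.univ.filter fun g : Fin n → Fin r => Function.Injective g)
      (fun g => (A.submatrix g id).det) with hG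
  -- the gcd divides every `det (A.submatrix g id)`, injective or not
  have hGdvd : ∀ g : Fin n → Fin r, G ∣ (A.submatrix g id).det := by
    intro g
    by_cases hinj : Function.Injective g
    · exact Finset.gcd_dvd (by simp [hinj])
    · obtain ⟨i, j, hij, hne⟩ := Function.not_injective_iff.mp hinj
      rw [Matrix.det_zero_of_row_eq hne (by funext x; simp [Matrix.submatrix_apply, hij])]
      exact dvd_zero G
  -- determinant of the matrix of the `w j` is `d` times a unit
  have hWdet : (Matrix.of fun i => w i).det
      = d * (Matrix.of fun i j => snf.bM (snf.f i) j).det := by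
    have he : (Matrix.of fun i => w i)
        = Matrix.of fun i j => (snf.a i) * (Matrix.of fun i' j' => snf.bM (snf.f i') j') i j := by
      ext i j
      simp [hw, Pi.smul_apply, smul_eq_mul]
    rw [he, Matrix.det_mul_column]
  have hu : IsUnit (Matrix.of fun i j => snf.bM (snf.f i) j).det := by
    set b' := snf.bM.reindex (Equiv.ofBijective snf.f hbij).symm with hb'
    have h3 := (Pi.basisFun ℤ (Fin n)).isUnit_det b'
    have h4 : (Pi.basisFun ℤ (Fin n)).toMatrix ⇑b'
        = Matrix.transpose (Matrix.of fun i j => snf.bM (snf.f i) j) := by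
      ext i j
      rw [Module.Basis.toMatrix_apply, Pi.basisFun_repr, Matrix.transpose_apply, Matrix.of_apply]
      rw [hb', Module.Basis.reindex_apply]
      simp
    rw [Module.Basis.det_apply, h4, Matrix.det_transpose] at h3
    exact h3
  -- the gcd divides `d`
  have hGd : G ∣ d := by
    choose e he using fun i => (Submodule.mem_span_range_iff_exists_fun ℤ).mp (hwmem i)
    have hWA : (Matrix.of fun i => w i) = Matrix.of fun i => ∑ j, e i j • A j := by
      ext i j
      exact (congrFun (he i) j).symm
    have h5 : G ∣ (Matrix.of fun i => w i).det := by
      rw [hWA, det_expand e (fun j => A j)]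
      refine Finset.dvd_sum fun h _ => Dvd.dvd.mul_left ?_ _
      exact hGdvd h
    rw [hWdet] at h5
    exact (IsUnit.dvd_mul_right hu).mp h5
  -- `d` divides the gcd
  have hdG : d ∣ G := Finset.dvd_gcd fun g _ => hdvd1 g
  have hGnonneg : 0 ≤ G := by
    rw [hG, ← Finset.normalize_gcd, ← Int.abs_eq_normalize]
    exact abs_nonneg _
  have hGabs : G = |d| :=
    Int.dvd_antisymm hGnonneg (abs_nonneg d) ((dvd_abs _ _).mpr hGd) ((abs_dvd _ _).mpr hdG)
  -- compute the index
  have hcard : Nat.card ((Fin n → ℤ) ⧸ S) = S.toAddSubgroup.index := rfl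
  have hidx : S.toAddSubgroup.index = ∏ i, (snf.a i).natAbs := by
    rw [snf.toAddSubgroup_index_eq_pow_mul_prod]
    simp [Ideal.span_singleton_toAddSubgroup_eq_zmultiples, Int.index_zmultiples]
  rw [hcard, hidx, hGabs, hd, Finset.abs_prod]
  push_cast [Int.natCast_natAbs]
  rfl
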